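/- If μ : M → ℝ³ is continuous on a compact space M, then the set {(t,s,z,w) ∈ ℝ_{>0} × M × ℂ² : t²·μ(s) = (½(|z|² − |w|²), i·z·w) and t² + |z|² + |w|² = 1} is compact. -/

import Mathlib

/-- If `μ : M → ℝ³ ≅ ℝ × ℂ` is continuous on a compact space `M`, then the level
set `{(t,s,z,w) ∈ ℝ_{>0} × M × ℂ² : t²·μ(s) = (½(|z|²−|w|²), i·z·w),
t² + |z|² + |w|² = 1}` defining the three-Sasaki modification is compact. -/
theorem stmt_5 {M : Type*} [TopologicalSpace M] [CompactSpace M]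
    (μ : M → ℝ × ℂ) (hμ : Continuous μ) :
    IsCompact {x : ℝ × M × ℂ × ℂ | 0 < x.1 ∧
      (x.1 ^ 2 * (μ x.2.1).1, (x.1 ^ 2 : ℂ) * (μ x.2.1).2) =
        ((1 / 2 : ℝ) * (‖x.2.2.1‖ ^ 2 - ‖x.2.2.2‖ ^ 2),
          Complex.I * x.2.2.1 * x.2.2.2) ∧
      x.1 ^ 2 + ‖x.2.2.1‖ ^ 2 + ‖x.2.2.2‖ ^ 2 = 1} := by
  obtain ⟨K, hK0, hK⟩ : ∃ K : ℝ, 0 ≤ K ∧ ∀ s, ‖μ s‖ ≤ K := by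
    obtain ⟨K, hK⟩ := (isCompact_range hμ.norm).bddAbove
    exact ⟨max K 0, le_max_right _ _, fun s => le_trans (hK ⟨s, rfl⟩) (le_max_left _ _)⟩
  have h4K : (0:ℝ) < 1 + 4 * K := by linarith
  set c := Real.sqrt (1 / (1 + 4 * K)) with hc
  have hcpos : 0 < c := Real.sqrt_pos.mpr (by positivity)
  -- the key lower bound on t
  have key : ∀ x : ℝ × M × ℂ × ℂ, 0 < x.1 →
      (x.1 ^ 2 * (μ x.2.1).1, (x.1 ^ 2 : ℂ) * (μ x.2.1).2) =
        ((1 / 2 : ℝ) * (‖x.2.2.1‖ ^ 2 - ‖x.2.2.2‖ ^ 2),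
          Complex.I * x.2.2.1 * x.2.2.2) →
      x.1 ^ 2 + ‖x.2.2.1‖ ^ 2 + ‖x.2.2.2‖ ^ 2 = 1 →
      c ≤ x.1 := by
    rintro ⟨t, s, z, w⟩ h0 h1 h2
    simp only [Prod.mk.injEq] at h1
    obtain ⟨h1a, h1b⟩ := h1
    set a := ‖z‖ with ha
    set b := ‖w‖ with hb
    have ha0 : 0 ≤ a := norm_nonneg z
    have hb0 : 0 ≤ b := norm_nonneg w
    have hμ1 : |(μ s).1| ≤ K := le_trans (norm_fst_le (μ s)) (hK s)
    have hμ2 : ‖(μ s).2‖ ≤ K := by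
      have := le_trans (norm_snd_le (μ s)) (hK s)
      simpa using this
    have hab : a * b ≤ K * t ^ 2 := by
      have := congrArg norm h1b
      simp only [norm_mul, Complex.norm_I, one_mul] at this
      have habs : ‖((t:ℂ) ^ 2)‖ = t ^ 2 := by
        rw [norm_pow]; simp [abs_of_pos h0]
      rw [show ((t:ℝ)^2 : ℂ) = ((t:ℂ))^2 by ring] at this
      rw [habs] at this
      calc a * b = t ^ 2 * ‖(μ s).2‖ := this.symm
        _ ≤ t ^ 2 * K := by nlinarith
        _ = K * t ^ 2 := by ring
    have hdiff : |a ^ 2 - b ^ 2| ≤ 2 * K * t ^ 2 := by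
      have : a ^ 2 - b ^ 2 = 2 * (t ^ 2 * (μ s).1) := by rw [h1a]; ring
      rw [this, abs_mul, abs_mul]
      have : |t ^ 2| = t ^ 2 := abs_of_nonneg (by positivity)
      rw [this]
      have : |(2:ℝ)| = 2 := by norm_num
      rw [this]
      nlinarith
    have hsum : a ^ 2 + b ^ 2 ≤ 4 * K * t ^ 2 := by
      rcases le_total b a with hba | hba
      · have h1 : a ^ 2 - b ^ 2 ≤ 2 * K * t ^ 2 := le_trans (le_abs_self _) hdiff
        nlinarith [mul_nonneg hb0 (sub_nonneg.mpr hba)]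
      · have h1 : b ^ 2 - a ^ 2 ≤ 2 * K * t ^ 2 := by
          rw [abs_sub_comm] at hdiff
          exact le_trans (le_abs_self _) hdiff
        nlinarith [mul_nonneg ha0 (sub_nonneg.mpr hba)]
    have ht2 : 1 / (1 + 4 * K) ≤ t ^ 2 := by
      rw [div_le_iff₀ h4K]
      nlinarith
    calc c ≤ Real.sqrt (t ^ 2) := Real.sqrt_le_sqrt ht2
      _ = t := by rw [Real.sqrt_sq h0.le]
  -- rewrite the set with a closed condition
  have hset : {x : ℝ × M × ℂ × ℂ | 0 < x.1 ∧
      (x.1 ^ 2 * (μ x.2.1).1, (x.1 ^ 2 : ℂ) * (μ x.2.1).2) =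
        ((1 / 2 : ℝ) * (‖x.2.2.1‖ ^ 2 - ‖x.2.2.2‖ ^ 2),
          Complex.I * x.2.2.1 * x.2.2.2) ∧
      x.1 ^ 2 + ‖x.2.2.1‖ ^ 2 + ‖x.2.2.2‖ ^ 2 = 1} =
      {x : ℝ × M × ℂ × ℂ | c ≤ x.1 ∧
      (x.1 ^ 2 * (μ x.2.1).1, (x.1 ^ 2 : ℂ) * (μ x.2.1).2) =
        ((1 / 2 : ℝ) * (‖x.2.2.1‖ ^ 2 - ‖x.2.2.2‖ ^ 2),
          Complex.I * x.2.2.1 * x.2.2.2) ∧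
      x.1 ^ 2 + ‖x.2.2.1‖ ^ 2 + ‖x.2.2.2‖ ^ 2 = 1} := by
    ext x
    constructor
    · rintro ⟨h0, h1, h2⟩
      exact ⟨key x h0 h1 h2, h1, h2⟩
    · rintro ⟨h0, h1, h2⟩
      exact ⟨lt_of_lt_of_le hcpos h0, h1, h2⟩
  rw [hset]
  -- the rewritten set is closed
  have hclosed : IsClosed {x : ℝ × M × ℂ × ℂ | c ≤ x.1 ∧
      (x.1 ^ 2 * (μ x.2.1).1, (x.1 ^ 2 : ℂ) * (μ x.2.1).2) =
        ((1 / 2 : ℝ) * (‖x.2.2.1‖ ^ 2 - ‖x.2.2.2‖ ^ 2),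
          Complex.I * x.2.2.1 * x.2.2.2) ∧
      x.1 ^ 2 + ‖x.2.2.1‖ ^ 2 + ‖x.2.2.2‖ ^ 2 = 1} := by
    apply IsClosed.inter (isClosed_le continuous_const continuous_fst)
    apply IsClosed.inter
    · apply isClosed_eq
      · apply Continuous.prodMk
        · exact ((continuous_fst.pow 2).mul
            ((continuous_fst.comp (hμ.comp (continuous_fst.comp continuous_snd)))))
        · exact (((Complex.continuous_ofReal.comp continuous_fst).pow 2).mul
            ((continuous_snd.comp (hμ.comp (continuous_fst.comp continuous_snd)))))
      · apply Continuous.prodMk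
        · exact continuous_const.mul
            (((continuous_norm.comp
                (continuous_fst.comp (continuous_snd.comp continuous_snd))).pow 2).sub
             ((continuous_norm.comp
                (continuous_snd.comp (continuous_snd.comp continuous_snd))).pow 2))
        · exact (continuous_const.mul
            (continuous_fst.comp (continuous_snd.comp continuous_snd))).mul
            (continuous_snd.comp (continuous_snd.comp continuous_snd))
    · apply isClosed_eq _ continuous_const
      exact ((continuous_fst.pow 2).add
        ((continuous_norm.comp
            (continuous_fst.comp (continuous_snd.comp continuous_snd))).pow 2)).add
        ((continuous_norm.comp
            (continuous_snd.comp (continuous_snd.comp continuous_snd))).pow 2)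
  -- it sits inside a compact box
  have hcompactT : IsCompact ((Set.Icc (0:ℝ) 1) ×ˢ (Set.univ : Set M) ×ˢ
      (Metric.closedBall (0:ℂ) 1) ×ˢ (Metric.closedBall (0:ℂ) 1)) :=
    isCompact_Icc.prod (isCompact_univ.prod
      ((isCompact_closedBall _ _).prod (isCompact_closedBall _ _)))
  apply IsCompact.of_isClosed_subset hcompactT hclosed
  rintro ⟨t, s, z, w⟩ ⟨h0, h1, h2⟩
  simp only [Set.mem_setOf_eq] at h2
  have ht : 0 < t := lt_of_lt_of_le hcpos h0
  have ha0 : 0 ≤ ‖z‖ := norm_nonneg z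
  have hb0 : 0 ≤ ‖w‖ := norm_nonneg w
  refine ⟨⟨ht.le, ?_⟩, Set.mem_univ _, ?_, ?_⟩
  · nlinarith [sq_nonneg ‖z‖, sq_nonneg ‖w‖, sq_nonneg (t - 1)]
  · simp only [Metric.mem_closedBall, Complex.dist_eq, sub_zero]
    nlinarith [sq_nonneg t]
  · simp only [Metric.mem_closedBall, Complex.dist_eq, sub_zero]
    nlinarith [sq_nonneg t]
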